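/- Let μ : (0,∞) → ℝ be measurable, nonnegative and essentially bounded with M := ess sup μ, and suppose ∫_0^∞ x² μ(x) dx < ∞. Then 9M · (∫_0^∞ x² μ(x) dx)² ≥ 8 · (∫_0^∞ x μ(x) dx)³; equivalently, if M > 0 then ∫_0^∞ x² μ(x) dx ≥ (2^{3/2}/(3 M^{1/2})) · (∫_0^∞ x μ(x) dx)^{3/2}. -/

import Mathlib

open MeasureTheory Set

/-- Lemma 6.8 (ii): second moment vs first moment for a bounded density. -/
theorem stmt_2 (μ : ℝ → ℝ)
    (hmeas : Measurable μ)
    (hnn : ∀ x ∈ Ioi (0:ℝ), 0 ≤ μ x)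
    (hbdd : Filter.IsBoundedUnder (· ≤ ·) (ae (volume.restrict (Ioi (0:ℝ)))) μ)
    (hint2 : IntegrableOn (fun x => x ^ 2 * μ x) (Ioi 0)) :
    8 * (∫ x in Ioi (0:ℝ), x * μ x) ^ 3 ≤
      9 * essSup μ (volume.restrict (Ioi (0:ℝ))) *
        (∫ x in Ioi (0:ℝ), x ^ 2 * μ x) ^ 2 := by
  set ν := volume.restrict (Ioi (0:ℝ)) with hν
  set M := essSup μ ν with hMdef
  have hle : ∀ᵐ x ∂ν, μ x ≤ M := ae_le_essSup hbdd
  have hnn' : ∀ᵐ x ∂ν, 0 ≤ μ x :=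
    (ae_restrict_iff' measurableSet_Ioi).2 (Filter.Eventually.of_forall hnn)
  have hνne : ν ≠ 0 := by
    simp [hν, Measure.restrict_eq_zero]
  have hMnn : 0 ≤ M := by
    have : (ae ν).NeBot := ae_neBot.2 hνne
    obtain ⟨x, h1, h2⟩ := (hle.and hnn').exists
    linarith
  set I1 := ∫ x in Ioi (0:ℝ), x * μ x with hI1def
  set I2 := ∫ x in Ioi (0:ℝ), x ^ 2 * μ x with hI2def
  have hI2nn : 0 ≤ I2 :=
    setIntegral_nonneg measurableSet_Ioi fun x hx =>
      mul_nonneg (by positivity) (hnn x hx)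
  -- integrability of x * μ x
  have hconstind : Integrable ((Ioc (0:ℝ) 1).indicator fun _ => M) ν := by
    rw [integrable_indicator_iff measurableSet_Ioc]
    refine integrableOn_const ?_ (by simp)
    apply ne_of_lt
    calc ν (Ioc 0 1) ≤ volume (Ioc (0:ℝ) 1) := Measure.restrict_le_self _
    _ < ⊤ := by simp
  have hint1 : IntegrableOn (fun x => x * μ x) (Ioi 0) := by
    apply Integrable.mono' (hconstind.add hint2)
    · exact ((measurable_id.mul hmeas).aestronglyMeasurable)
    · filter_upwards [hle, hnn', ae_restrict_mem measurableSet_Ioi] with x h1 h2 h3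
      simp only [mem_Ioi] at h3
      simp only [Pi.add_apply]
      rw [Real.norm_eq_abs, abs_of_nonneg (mul_nonneg h3.le h2)]
      by_cases hx1 : x ≤ 1
      · rw [indicator_of_mem (mem_Ioc.mpr ⟨h3, hx1⟩)]
        nlinarith
      · rw [indicator_of_notMem (by simp [hx1])]
        push_neg at hx1
        nlinarith [mul_nonneg (mul_nonneg h2 h3.le) (sub_nonneg.2 hx1.le)]
  have hI1nn : 0 ≤ I1 :=
    setIntegral_nonneg measurableSet_Ioi fun x hx =>
      mul_nonneg (le_of_lt hx) (hnn x hx)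
  -- degenerate cases
  rcases eq_or_lt_of_le hMnn with hM0 | hMpos
  · -- M = 0 : μ = 0 a.e.
    have hμ0 : ∀ᵐ x ∂ν, x * μ x = 0 := by
      filter_upwards [hle, hnn'] with x h1 h2
      have : μ x = 0 := le_antisymm (hM0 ▸ h1) h2
      simp [this]
    have hI10 : I1 = 0 := by
      rw [hI1def, integral_congr_ae hμ0, integral_zero]
    rw [hI10, ← hM0]
    norm_num
  rcases eq_or_lt_of_le hI2nn with hI20 | hI2pos
  · -- I2 = 0 : x^2 μ = 0 a.e., so μ = 0 a.e.
    have h0 : (fun x => x ^ 2 * μ x) =ᵐ[ν] 0 := by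
      rw [← integral_eq_zero_iff_of_nonneg_ae (by
        filter_upwards [hnn'] with x h2; positivity) hint2]
      exact hI20.symm
    have hμ0 : ∀ᵐ x ∂ν, x * μ x = 0 := by
      filter_upwards [h0, ae_restrict_mem measurableSet_Ioi] with x h1 h3
      simp only [mem_Ioi] at h3
      simp only [Pi.zero_apply] at h1
      have hμx : μ x = 0 := by
        rcases mul_eq_zero.1 h1 with h | h
        · exact absurd h (by positivity)
        · exact h
      simp [hμx]
    have hI10 : I1 = 0 := by
      rw [hI1def, integral_congr_ae hμ0, integral_zero]
    rw [hI10, ← hI20]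
    norm_num
  -- main case : M > 0, I2 > 0
  set R := (3 * I2 / M) ^ ((1:ℝ)/3) with hRdef
  have hRpos : 0 < R := Real.rpow_pos_of_pos (by positivity) _
  have hR3 : R ^ 3 = 3 * I2 / M := by
    rw [hRdef, ← Real.rpow_natCast _ 3, ← Real.rpow_mul (by positivity)]
    norm_num
  have hMR3 : M * R ^ 3 = 3 * I2 := by
    rw [hR3]; field_simp
  -- pointwise inequality
  have hpt : ∀ᵐ x ∂ν, R * (x * μ x) - x ^ 2 * μ x ≤
      (Ioc 0 R).indicator (fun x => M * R * x - M * x ^ 2) x := by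
    filter_upwards [hle, hnn', ae_restrict_mem measurableSet_Ioi] with x h1 h2 h3
    simp only [mem_Ioi] at h3
    by_cases hxR : x ≤ R
    · rw [indicator_of_mem (mem_Ioc.mpr ⟨h3, hxR⟩)]
      nlinarith [mul_nonneg (mul_nonneg h3.le (sub_nonneg.2 hxR)) (sub_nonneg.2 h1)]
    · rw [indicator_of_notMem (by simp [hxR])]
      push_neg at hxR
      nlinarith [mul_nonneg (mul_nonneg h3.le h2) (sub_nonneg.2 hxR.le)]
  -- integrability of both sides
  have hlhs : Integrable (fun x => R * (x * μ x) - x ^ 2 * μ x) ν :=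
    (hint1.const_mul R).sub hint2
  have hrhs : Integrable ((Ioc (0:ℝ) R).indicator fun x => M * R * x - M * x ^ 2) ν := by
    rw [integrable_indicator_iff measurableSet_Ioc]
    have hsub : Ioc (0:ℝ) R ⊆ Ioi 0 := Ioc_subset_Ioi_self
    rw [hν, IntegrableOn, Measure.restrict_restrict measurableSet_Ioc,
      inter_eq_left.2 hsub]
    exact ((continuous_const.mul continuous_id).sub
      (continuous_const.mul (continuous_pow 2))).integrableOn_Ioc
  -- integral of the rhs
  have hrhsval : ∫ x, (Ioc (0:ℝ) R).indicator (fun x => M * R * x - M * x ^ 2) x ∂ν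
      = M * R ^ 3 / 6 := by
    rw [integral_indicator measurableSet_Ioc]
    have hsub : Ioc (0:ℝ) R ⊆ Ioi 0 := Ioc_subset_Ioi_self
    rw [hν, Measure.restrict_restrict measurableSet_Ioc, inter_eq_left.2 hsub]
    rw [← intervalIntegral.integral_of_le hRpos.le]
    have hval : ∫ x in (0:ℝ)..R, (M * R * x - M * x ^ 2) =
        M * R * (R ^ 2 / 2) - M * (R ^ 3 / 3) := by
      have hc1 : Continuous fun x : ℝ => M * R * x := continuous_const.mul continuous_id
      have hc2 : Continuous fun x : ℝ => M * x ^ 2 := continuous_const.mul (continuous_pow 2)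
      rw [intervalIntegral.integral_sub (hc1.intervalIntegrable 0 R)
        (hc2.intervalIntegrable 0 R)]
      rw [intervalIntegral.integral_const_mul, intervalIntegral.integral_const_mul]
      rw [integral_id, integral_pow]
      norm_num
    rw [hval]; ring
  -- key inequality
  have hkey : R * I1 - I2 ≤ M * R ^ 3 / 6 := by
    have hmono := integral_mono_ae hlhs hrhs hpt
    rw [hrhsval] at hmono
    rw [integral_sub (hint1.const_mul R) hint2, integral_const_mul] at hmono
    exact hmono
  -- conclude
  have hI1R : 2 * I1 ≤ M * R ^ 2 := by
    have h2 : R * (2 * I1) ≤ R * (M * R ^ 2) := by nlinarith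
    exact le_of_mul_le_mul_left h2 hRpos
  have hc : (2 * I1) ^ 3 ≤ (M * R ^ 2) ^ 3 :=
    pow_le_pow_left₀ (by positivity) hI1R 3
  have h9 : M ^ 2 * R ^ 6 = 9 * I2 ^ 2 := by
    nlinarith [hMR3]
  nlinarith [hc, h9, hMpos.le, mul_le_mul_of_nonneg_left h9.le hMpos.le, mul_le_mul_of_nonneg_left h9.ge hMpos.le]
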